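/- Let G be a digraph and a, b vertices of G. Set A := N⁺(a) \ {b} and B := N⁻(b) \ {a}. Let ω ∈ Ω₃(G) be a minimal ∂-invariant (a,b)-cluster with no terminal elements, i.e., every elementary term e_{a i j b} occurring in ω with nonzero coefficient satisfies a ↛ j, a ≠ j, i ↛ b, and i ≠ b. Then there exist an integer m ≥ 2, a scalar c ∈ K, pairwise distinct vertices i₀,…,i_{m−1} ∈ A \ B, and pairwise distinct vertices j₀,…,j_{m−1} ∈ B \ A with i_k → j_k and i_{k+1} → j_k for all k = 0,…,m−1 (indices mod m), such that ω = c · Σ_{k=0}^{m−1} (e_{a i_k j_k b} − e_{a i_{k+1} j_k b}). -/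

import Mathlib

open scoped BigOperators
open Classical

/-- A digraph: an irreflexive relation on a vertex type. -/
structure Dgraph (V : Type*) where
  Adj : V → V → Prop
  loopless : ∀ v : V, ¬ Adj v v

/-- An elementary `p`-path on the vertex type `V`: a sequence of `p+1` vertices. -/
abbrev EPath (V : Type*) (p : ℕ) := Fin (p + 1) → V

/-- A path is regular if consecutive vertices are distinct. -/
def IsRegularPath {V : Type*} {p : ℕ} (f : EPath V p) : Prop :=
  ∀ k : Fin p, f k.castSucc ≠ f k.succ

/-- A path is allowed if consecutive vertices are joined by an arrow. -/
def IsAllowedPath {V : Type*} (G : Dgraph V) {p : ℕ} (f : EPath V p) : Prop :=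
  ∀ k : Fin p, G.Adj (f k.castSucc) (f k.succ)

/-- The projection of `Λ_p` onto its regular part; this realizes `R_p = Λ_p / I_p`
as the subspace of `Λ_p` spanned by the regular elementary paths. -/
noncomputable def regProj (K : Type*) [Field K] (V : Type*) (p : ℕ) :
    (EPath V p →₀ K) →ₗ[K] (EPath V p →₀ K) :=
  Finsupp.linearCombination K
    (fun f : EPath V p => if IsRegularPath f then Finsupp.single f (1 : K) else 0)

/-- The (non-reduced) boundary operator on `Λ`. -/
noncomputable def bdryFull (K : Type*) [Field K] (V : Type*) (p : ℕ) :
    (EPath V (p + 1) →₀ K) →ₗ[K] (EPath V p →₀ K) :=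
  Finsupp.linearCombination K
    (fun f : EPath V (p + 1) =>
      ∑ q : Fin (p + 2), ((-1 : K) ^ (q : ℕ)) • Finsupp.single (f ∘ q.succAbove) (1 : K))

/-- The boundary operator `∂` on the regular part (i.e. on `R`). -/
noncomputable def bdry (K : Type*) [Field K] (V : Type*) (p : ℕ) :
    (EPath V (p + 1) →₀ K) →ₗ[K] (EPath V p →₀ K) :=
  (regProj K V p).comp (bdryFull K V p)

/-- The span of the regular elementary paths: the realization of `R_p` inside `Λ_p`. -/
noncomputable def regularMod (K : Type*) [Field K] (V : Type*) (p : ℕ) :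
    Submodule K (EPath V p →₀ K) :=
  Submodule.span K {x | ∃ f : EPath V p, IsRegularPath f ∧ x = Finsupp.single f (1 : K)}

/-- `A_p(G)`: the span of the allowed elementary paths. -/
noncomputable def allowedMod (K : Type*) [Field K] (V : Type*) (G : Dgraph V) (p : ℕ) :
    Submodule K (EPath V p →₀ K) :=
  Submodule.span K {x | ∃ f : EPath V p, IsAllowedPath G f ∧ x = Finsupp.single f (1 : K)}

/-- `Ω_p(G)`: the space of ∂-invariant `p`-paths. -/
noncomputable def Omega (K : Type*) [Field K] (V : Type*) (G : Dgraph V) :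
    (p : ℕ) → Submodule K (EPath V p →₀ K)
  | 0 => allowedMod K V G 0
  | (p + 1) => allowedMod K V G (p + 1) ⊓ (allowedMod K V G p).comap (bdry K V p)

/-- An `(a,b)`-cluster: every elementary path occurring with nonzero coefficient
starts at `a` and ends at `b`. -/
def IsCluster {K : Type*} [Field K] {V : Type*} {p : ℕ} (a b : V) (ω : EPath V p →₀ K) : Prop :=
  ∀ f ∈ ω.support, f 0 = a ∧ f (Fin.last p) = b

/-- A minimal ∂-invariant path: a nonzero element of `Ω_p` such that no nonzero
∂-invariant path is supported on a proper (nonempty) subset of its support. -/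
def IsMinimal (K : Type*) [Field K] {V : Type*} (G : Dgraph V) (p : ℕ)
    (ω : EPath V p →₀ K) : Prop :=
  ω ∈ Omega K V G p ∧ ω ≠ 0 ∧
    ∀ ω' : EPath V p →₀ K, ω' ∈ Omega K V G p → ω' ≠ 0 → ¬ (ω'.support ⊂ ω.support)

/-- A digraph map: every arrow goes to an arrow or collapses to a vertex. -/
structure DgraphMap {V W : Type*} (X : Dgraph V) (Y : Dgraph W) where
  toFun : V → W
  map_adj : ∀ ⦃u v : V⦄, X.Adj u v → Y.Adj (toFun u) (toFun v) ∨ toFun u = toFun v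

/-- The induced map `f_* : R_n(X) → R_n(Y)` (in the regular-part realization):
push forward elementary paths and kill the irregular ones. -/
noncomputable def inducedMap (K : Type*) [Field K] {V W : Type*} (φ : V → W) (p : ℕ) :
    (EPath V p →₀ K) →ₗ[K] (EPath W p →₀ K) :=
  (regProj K W p).comp (Finsupp.lmapDomain K K (fun f : EPath V p => φ ∘ f))

/-- Cyclic successor on `Fin m`. -/
def finRot {m : ℕ} (k : Fin m) : Fin m := ⟨((k : ℕ) + 1) % m, Nat.mod_lt _ k.pos⟩

/-- The vertices of the trapezohedron `T_m`. -/
inductive TVert (m : ℕ) : Type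
  | a : TVert m
  | b : TVert m
  | vi : Fin m → TVert m
  | vj : Fin m → TVert m

/-- The adjacency relation of the trapezohedron `T_m`:
`a → i_k`, `i_k → j_k`, `i_{k+1} → j_k`, `j_k → b` (indices mod `m`). -/
def TrapAdj (m : ℕ) : TVert m → TVert m → Prop
  | TVert.a, TVert.vi _ => True
  | TVert.vi k, TVert.vj l => k = l ∨ k = finRot l
  | TVert.vj _, TVert.b => True
  | _, _ => False

/-- The trapezohedron digraph `T_m`. -/
def Trap (m : ℕ) : Dgraph (TVert m) where
  Adj := TrapAdj m
  loopless := by intro v h; cases v <;> exact h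

/-- The trapezohedral path `τ_m`. -/
noncomputable def tau (K : Type*) [Field K] (m : ℕ) : EPath (TVert m) 3 →₀ K :=
  ∑ k : Fin m,
    (Finsupp.single ![TVert.a, TVert.vi k, TVert.vj k, TVert.b] (1 : K)
      - Finsupp.single ![TVert.a, TVert.vi (finRot k), TVert.vj k, TVert.b] (1 : K))

/-- The submodule of `(a,b)`-clusters. -/
def clusterMod (K : Type*) [Field K] (V : Type*) (p : ℕ) (a b : V) :
    Submodule K (EPath V p →₀ K) where
  carrier := {ω | ∀ f ∈ ω.support, f 0 = a ∧ f (Fin.last p) = b}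
  add_mem' := by
    intro x y hx hy f hf
    rcases Finset.mem_union.mp (Finsupp.support_add hf) with h | h
    exacts [hx f h, hy f h]
  zero_mem' := by intro f hf; simp at hf
  smul_mem' := by
    intro c x hx f hf
    exact hx f (Finsupp.support_smul hf)

/-- `Ω₃^{(a,b)}(G)`: the ∂-invariant `(a,b)`-clusters. -/
noncomputable def OmegaAB (K : Type*) [Field K] (V : Type*) (G : Dgraph V) (a b : V) :
    Submodule K (EPath V 3 →₀ K) :=
  Omega K V G 3 ⊓ clusterMod K V 3 a b

/-- Out-neighbourhood. -/
def Nplus {V : Type*} (G : Dgraph V) (v : V) : Set V := {w | G.Adj v w}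

/-- In-neighbourhood. -/
def Nminus {V : Type*} (G : Dgraph V) (v : V) : Set V := {w | G.Adj w v}

/-- `E(X,Y)`: the edges of `G` starting in `X` and ending in `Y`. -/
def Ebetween {V : Type*} (G : Dgraph V) (X Y : Set V) : Set (V × V) :=
  {p | p.1 ∈ X ∧ p.2 ∈ Y ∧ G.Adj p.1 p.2}

/-- `A = N⁺(a) \ {b}`. -/
def setA {V : Type*} (G : Dgraph V) (a b : V) : Set V := Nplus G a \ {b}

/-- `B = N⁻(b) \ {a}`. -/
def setB {V : Type*} (G : Dgraph V) (a b : V) : Set V := Nminus G b \ {a}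

/-- The vertex set of `H = Ind(A \ B, B \ A)`. -/
def Hverts {V : Type*} (G : Dgraph V) (a b : V) : Set V :=
  (setA G a b \ setB G a b) ∪ (setB G a b \ setA G a b)

/-- `H = Ind(A \ B, B \ A)` regarded as an undirected (simple) graph on its vertex set. -/
def Hgraph {V : Type*} (G : Dgraph V) (a b : V) : SimpleGraph (Hverts G a b) where
  Adj u v :=
    ((u : V) ∈ setA G a b \ setB G a b ∧ (v : V) ∈ setB G a b \ setA G a b ∧ G.Adj u v)
      ∨ ((v : V) ∈ setA G a b \ setB G a b ∧ (u : V) ∈ setB G a b \ setA G a b ∧ G.Adj v u)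
  symm := ⟨fun u v h => h.symm⟩
  loopless := by
    refine ⟨fun u h => ?_⟩
    rcases h with ⟨_, _, h3⟩ | ⟨_, _, h3⟩ <;> exact G.loopless _ h3

/-- The set of vertices of `G` belonging to the connected component `c` of `H`. -/
def compVerts {V : Type*} (G : Dgraph V) (a b : V)
    (c : (Hgraph G a b).ConnectedComponent) : Set V :=
  {v | ∃ h : v ∈ Hverts G a b, (Hgraph G a b).connectedComponentMk ⟨v, h⟩ = c}

/-- The set `S_k` associated to a connected component of `H`. -/
def Sset {V : Type*} (G : Dgraph V) (a b : V)
    (c : (Hgraph G a b).ConnectedComponent) : Set (V × V) :=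
  Ebetween G (compVerts G a b c ∩ (setA G a b \ setB G a b))
      ((Nplus G a ∪ {a}) ∩ Nminus G b)
    ∪ Ebetween G (Nplus G a ∩ (Nminus G b ∪ {b}))
      (compVerts G a b c ∩ (setB G a b \ setA G a b))

section Aux1
variable {K : Type*} [Field K] {V : Type*}

lemma vec3_eq_iff {x y z x' y' z' : V} :
    (![x,y,z] = ![x',y',z']) ↔ x = x' ∧ y = y' ∧ z = z' := by
  constructor
  · intro h; exact ⟨congrFun h 0, congrFun h 1, congrFun h 2⟩
  · rintro ⟨rfl, rfl, rfl⟩; rfl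

lemma epath3_shape (f : EPath V 3) : f = ![f 0, f 1, f 2, f 3] := by
  funext x; fin_cases x <;> rfl

lemma regProj_single (f : EPath V 2) (c : K) (h : IsRegularPath f) :
    regProj K V 2 (Finsupp.single f c) = Finsupp.single f c := by
  rw [regProj, Finsupp.linearCombination_single, if_pos h, Finsupp.smul_single, smul_eq_mul, mul_one]

lemma comp_succAbove0 (f : EPath V 3) : f ∘ (0 : Fin 4).succAbove = ![f 1, f 2, f 3] := by
  funext x; fin_cases x <;> rfl

lemma comp_succAbove1 (f : EPath V 3) : f ∘ (1 : Fin 4).succAbove = ![f 0, f 2, f 3] := by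
  funext x; fin_cases x <;> rfl

lemma comp_succAbove2 (f : EPath V 3) : f ∘ (2 : Fin 4).succAbove = ![f 0, f 1, f 3] := by
  funext x; fin_cases x <;> rfl

lemma comp_succAbove3 (f : EPath V 3) : f ∘ (3 : Fin 4).succAbove = ![f 0, f 1, f 2] := by
  funext x; fin_cases x <;> rfl

lemma reg3 {x y z : V} (h1 : x ≠ y) (h2 : y ≠ z) : IsRegularPath ![x,y,z] := by
  intro k; fin_cases k <;> simpa [IsRegularPath]

lemma bdry_single_abij (a i j b : V) (hai : a ≠ i) (hij : i ≠ j) (hjb : j ≠ b)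
    (haj : a ≠ j) (hib : i ≠ b) :
    bdry K V 2 (Finsupp.single (![a,i,j,b]) (1:K)) =
      Finsupp.single ![i,j,b] 1 - Finsupp.single ![a,j,b] 1
        + Finsupp.single ![a,i,b] 1 - Finsupp.single ![a,i,j] 1 := by
  have e0 := comp_succAbove0 (V := V) ![a,i,j,b]
  have e1 := comp_succAbove1 (V := V) ![a,i,j,b]
  have e2 := comp_succAbove2 (V := V) ![a,i,j,b]
  have e3 := comp_succAbove3 (V := V) ![a,i,j,b]
  simp only [Matrix.cons_val_zero, Matrix.cons_val_one, Matrix.head_cons,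
    Matrix.cons_val_two, Matrix.tail_cons, Matrix.cons_val_three] at e0 e1 e2 e3
  rw [bdry, LinearMap.comp_apply, bdryFull, Finsupp.linearCombination_single, one_smul,
    Fin.sum_univ_four, e0, e1, e2, e3]
  have r0 := regProj_single (K:=K) ![i,j,b] 1 (reg3 hij hjb)
  have r1 := regProj_single (K:=K) ![a,j,b] 1 (reg3 haj hjb)
  have r2 := regProj_single (K:=K) ![a,i,b] 1 (reg3 hai hib)
  have r3 := regProj_single (K:=K) ![a,i,j] 1 (reg3 hai hij)
  have p0 : ((-1:K))^(((0:Fin 4)):ℕ) = 1 := by rw [show (((0:Fin 4)):ℕ) = 0 from rfl]; norm_num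
  have p1 : ((-1:K))^(((1:Fin 4)):ℕ) = -1 := by rw [show (((1:Fin 4)):ℕ) = 1 from rfl]; norm_num
  have p2 : ((-1:K))^(((2:Fin 4)):ℕ) = 1 := by rw [show (((2:Fin 4)):ℕ) = 2 from rfl]; norm_num
  have p3 : ((-1:K))^(((3:Fin 4)):ℕ) = -1 := by rw [show (((3:Fin 4)):ℕ) = 3 from rfl]; norm_num
  simp only [map_add, map_smul, r0, r1, r2, r3, p0, p1, p2, p3, one_smul, neg_smul, map_neg]
  abel

end Aux1

section Part2
variable {K : Type*} [Field K] {V : Type*} {G : Dgraph V}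

lemma allowedMod_eq (G : Dgraph V) (p : ℕ) :
    allowedMod K V G p = Finsupp.supported K K {f | IsAllowedPath G f} := by
  rw [Finsupp.supported_eq_span_single, allowedMod]
  congr 1
  ext x
  constructor
  · rintro ⟨f, hf, rfl⟩; exact ⟨f, hf, rfl⟩
  · rintro ⟨f, hf, rfl⟩; exact ⟨f, hf, rfl⟩

lemma lin_apply {α : Type*} {β : Type*} [AddCommMonoid β] [Module K β]
    (L : (α →₀ K) →ₗ[K] β) (x : α →₀ K) :
    L x = ∑ f ∈ x.support, x f • L (Finsupp.single f 1) := by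
  conv_lhs => rw [← Finsupp.sum_single x]
  rw [Finsupp.sum, map_sum]
  refine Finset.sum_congr rfl fun f _ => ?_
  rw [← map_smul, Finsupp.smul_single, smul_eq_mul, mul_one]

lemma Omega3_eq (G : Dgraph V) :
    Omega K V G 3 = allowedMod K V G 3 ⊓ (allowedMod K V G 2).comap (bdry K V 2) := rfl

end Part2

section Part2b
variable {K : Type*} [Field K] {V : Type*} {G : Dgraph V}

lemma vec4_eq_iff {x y z w x' y' z' w' : V} :
    (![x,y,z,w] = ![x',y',z',w']) ↔ x = x' ∧ y = y' ∧ z = z' ∧ w = w' := by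
  constructor
  · intro h; exact ⟨congrFun h 0, congrFun h 1, congrFun h 2, congrFun h 3⟩
  · rintro ⟨rfl, rfl, rfl, rfl⟩; rfl

lemma finRot_eq_add_one {m : ℕ} [NeZero m] (k : Fin m) : finRot k = k + 1 := by
  apply Fin.ext
  rw [Fin.add_def]
  show ((k:ℕ) + 1) % m = ((k:ℕ) + (1:Fin m).val) % m
  rw [Fin.val_one', Nat.add_mod, Nat.mod_eq_of_lt k.isLt]

lemma finRot_ne {m : ℕ} (hm : 2 ≤ m) (k : Fin m) : finRot k ≠ k := by
  haveI : NeZero m := ⟨by omega⟩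
  rw [finRot_eq_add_one]
  intro h
  have h1 : (1 : Fin m) = 0 := by
    have := congrArg (· - k) h
    simpa [add_comm, add_sub_cancel_right] using this
  have h2 : ((1:Fin m) : ℕ) = 0 := by rw [h1]; rfl
  rw [Fin.val_one'] at h2
  rw [Nat.mod_eq_of_lt (by omega)] at h2
  omega

lemma finRot_injective {m : ℕ} [NeZero m] : Function.Injective (finRot (m := m)) := by
  intro x y h
  rw [finRot_eq_add_one, finRot_eq_add_one] at h
  exact add_left_injective 1 h

lemma allow3 {x y z : V} (h1 : G.Adj x y) (h2 : G.Adj y z) : IsAllowedPath G ![x,y,z] := by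
  intro k; fin_cases k <;> simpa

end Part2b

theorem statement17 (K : Type*) [Field K] {V : Type*} (G : Dgraph V) (a b : V)
    (ω : EPath V 3 →₀ K) (hmin : IsMinimal K G 3 ω) (hcl : IsCluster a b ω)
    (hterm : ∀ f ∈ ω.support,
        ¬ G.Adj a (f 2) ∧ a ≠ f 2 ∧ ¬ G.Adj (f 1) b ∧ f 1 ≠ b) :
    ∃ (m : ℕ) (_ : 2 ≤ m) (c : K) (iv jv : Fin m → V),
      Function.Injective iv ∧ Function.Injective jv ∧
      (∀ k : Fin m, iv k ∈ setA G a b \ setB G a b) ∧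
      (∀ k : Fin m, jv k ∈ setB G a b \ setA G a b) ∧
      (∀ k : Fin m, G.Adj (iv k) (jv k)) ∧
      (∀ k : Fin m, G.Adj (iv (finRot k)) (jv k)) ∧
      ω = c • ∑ k : Fin m, (Finsupp.single ![a, iv k, jv k, b] (1 : K)
          - Finsupp.single ![a, iv (finRot k), jv k, b] (1 : K)) := by
  classical
  obtain ⟨hΩ, hne, hminimal⟩ := hmin
  rw [Omega3_eq, Submodule.mem_inf, allowedMod_eq, allowedMod_eq, Submodule.mem_comap,
    Finsupp.mem_supported, Finsupp.mem_supported] at hΩ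
  obtain ⟨hωA, hbd⟩ := hΩ
  -- allowedness of support elements
  have hallow : ∀ f ∈ ω.support, IsAllowedPath G f := fun f hf => hωA hf
  have hadj01 : ∀ f ∈ ω.support, G.Adj a (f 1) := by
    intro f hf
    have := hallow f hf 0
    rwa [show f (Fin.castSucc 0) = f 0 from rfl, (hcl f hf).1] at this
  have hadj12 : ∀ f ∈ ω.support, G.Adj (f 1) (f 2) := by
    intro f hf
    exact hallow f hf 1
  have hadj23 : ∀ f ∈ ω.support, G.Adj (f 2) b := by
    intro f hf
    have := hallow f hf 2
    rwa [show f (Fin.succ 2) = f (Fin.last 3) from rfl, (hcl f hf).2] at this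
  -- shape
  have hshape : ∀ f ∈ ω.support, f = ![a, f 1, f 2, b] := by
    intro f hf
    have h0 := (hcl f hf).1
    have h3 := (hcl f hf).2
    funext x; fin_cases x
    · exact h0
    · rfl
    · rfl
    · exact h3
  -- side memberships
  have hf1A : ∀ f ∈ ω.support, f 1 ∈ setA G a b \ setB G a b := by
    intro f hf
    refine ⟨⟨hadj01 f hf, (hterm f hf).2.2.2⟩, ?_⟩
    rintro ⟨h1, -⟩
    exact (hterm f hf).2.2.1 h1
  have hf2B : ∀ f ∈ ω.support, f 2 ∈ setB G a b \ setA G a b := by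
    intro f hf
    refine ⟨⟨hadj23 f hf, fun h => (hterm f hf).2.1 h.symm⟩, ?_⟩
    rintro ⟨h1, -⟩
    exact (hterm f hf).1 h1
  -- distinctness facts for support elements
  have hne_af1 : ∀ f ∈ ω.support, a ≠ f 1 := fun f hf h =>
    G.loopless a (h ▸ hadj01 f hf)
  have hne_f12 : ∀ f ∈ ω.support, f 1 ≠ f 2 := fun f hf h =>
    G.loopless _ (h ▸ hadj12 f hf)
  have hne_f2b : ∀ f ∈ ω.support, f 2 ≠ b := fun f hf h =>
    G.loopless b (h ▸ hadj23 f hf)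
  -- the boundary of each support single
  have hbd_single : ∀ f ∈ ω.support,
      bdry K V 2 (Finsupp.single f (1:K)) =
        Finsupp.single ![f 1, f 2, b] 1 - Finsupp.single ![a, f 2, b] 1
          + Finsupp.single ![a, f 1, b] 1 - Finsupp.single ![a, f 1, f 2] 1 := by
    intro f hf
    conv_lhs => rw [hshape f hf]
    exact bdry_single_abij a (f 1) (f 2) b (hne_af1 f hf) (hne_f12 f hf)
      (hne_f2b f hf) ((hterm f hf).2.1) ((hterm f hf).2.2.2)
  -- evaluation of the boundary at a 2-path
  have hbd_eval : ∀ g : EPath V 2, bdry K V 2 ω g =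
      ∑ f ∈ ω.support, ω f *
        ((if ![f 1, f 2, b] = g then (1:K) else 0) - (if ![a, f 2, b] = g then 1 else 0)
          + (if ![a, f 1, b] = g then 1 else 0) - (if ![a, f 1, f 2] = g then 1 else 0)) := by
    intro g
    rw [lin_apply (bdry K V 2) ω, Finsupp.finset_sum_apply]
    refine Finset.sum_congr rfl fun f hf => ?_
    rw [Finsupp.smul_apply, hbd_single f hf, smul_eq_mul]
    congr 1
    simp [Finsupp.single_apply]
  -- vanishing at non-allowed 2-paths
  have hbd_zero : ∀ g : EPath V 2, ¬ IsAllowedPath G g → bdry K V 2 ω g = 0 := by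
    intro g hg
    by_contra h
    exact hg (hbd (Finsupp.mem_support_iff.2 h))
  -- column sums vanish
  have hcolsum : ∀ g0 ∈ ω.support,
      ∑ f ∈ ω.support.filter (fun f => f 2 = g0 2), ω f = 0 := by
    intro g0 hg0
    have hgnot : ¬ IsAllowedPath G ![a, g0 2, b] := fun h => (hterm g0 hg0).1 (h 0)
    have h0 := hbd_zero _ hgnot
    rw [hbd_eval] at h0
    have h1 : ∑ f ∈ ω.support, -(if f 2 = g0 2 then ω f else 0) = 0 := by
      refine Eq.trans (Finset.sum_congr rfl fun f hf => ?_) h0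
      rw [if_neg (fun hh : ![f 1, f 2, b] = ![a, g0 2, b] =>
            hne_af1 f hf ((vec3_eq_iff.1 hh).1).symm),
        if_neg (fun hh : ![a, f 1, b] = ![a, g0 2, b] =>
            (hf1A f hf).2 (by rw [(vec3_eq_iff.1 hh).2.1]; exact (hf2B g0 hg0).1)),
        if_neg (fun hh : ![a, f 1, f 2] = ![a, g0 2, b] =>
            hne_f2b f hf (vec3_eq_iff.1 hh).2.2)]
      by_cases h : f 2 = g0 2
      · rw [if_pos h, if_pos (by rw [h] : ![a, f 2, b] = ![a, g0 2, b])]; ring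
      · rw [if_neg h, if_neg (fun hh => h (vec3_eq_iff.1 hh).2.1)]; ring
    rw [Finset.sum_neg_distrib, neg_eq_zero, ← Finset.sum_filter] at h1
    exact h1
  -- row sums vanish
  have hrowsum : ∀ g0 ∈ ω.support,
      ∑ f ∈ ω.support.filter (fun f => f 1 = g0 1), ω f = 0 := by
    intro g0 hg0
    have hgnot : ¬ IsAllowedPath G ![a, g0 1, b] := fun h => (hterm g0 hg0).2.2.1 (h 1)
    have h0 := hbd_zero _ hgnot
    rw [hbd_eval] at h0
    have h1 : ∑ f ∈ ω.support, (if f 1 = g0 1 then ω f else 0) = 0 := by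
      refine Eq.trans (Finset.sum_congr rfl fun f hf => ?_) h0
      rw [if_neg (fun hh : ![f 1, f 2, b] = ![a, g0 1, b] =>
            hne_af1 f hf ((vec3_eq_iff.1 hh).1).symm),
        if_neg (fun hh : ![a, f 2, b] = ![a, g0 1, b] =>
            (hf2B f hf).2 (by rw [(vec3_eq_iff.1 hh).2.1]; exact (hf1A g0 hg0).1)),
        if_neg (fun hh : ![a, f 1, f 2] = ![a, g0 1, b] =>
            hne_f2b f hf (vec3_eq_iff.1 hh).2.2)]
      by_cases h : f 1 = g0 1
      · rw [if_pos h, if_pos (by rw [h] : ![a, f 1, b] = ![a, g0 1, b])]; ring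
      · rw [if_neg h, if_neg (fun hh => h (vec3_eq_iff.1 hh).2.1)]; ring
    rw [← Finset.sum_filter] at h1
    exact h1
  -- reduction to a cyclic structure
  suffices key : ∀ (m : ℕ), 2 ≤ m → ∀ iv jv : Fin m → V, Function.Injective iv →
      Function.Injective jv →
      (∀ k : Fin m, ![a, iv k, jv k, b] ∈ ω.support) →
      (∀ k : Fin m, ![a, iv (finRot k), jv k, b] ∈ ω.support) →
      (∃ (m : ℕ) (_ : 2 ≤ m) (c : K) (iv jv : Fin m → V),
        Function.Injective iv ∧ Function.Injective jv ∧
        (∀ k : Fin m, iv k ∈ setA G a b \ setB G a b) ∧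
        (∀ k : Fin m, jv k ∈ setB G a b \ setA G a b) ∧
        (∀ k : Fin m, G.Adj (iv k) (jv k)) ∧
        (∀ k : Fin m, G.Adj (iv (finRot k)) (jv k)) ∧
        ω = c • ∑ k : Fin m, (Finsupp.single ![a, iv k, jv k, b] (1 : K)
            - Finsupp.single ![a, iv (finRot k), jv k, b] (1 : K))) by
    obtain ⟨f0, hf0⟩ := Finsupp.support_nonempty_iff.2 hne
    have hJ2 : ∀ f ∈ ω.support, ∃ f' ∈ ω.support, f' 2 = f 2 ∧ f' 1 ≠ f 1 := by
      intro f hf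
      by_contra hc
      push_neg at hc
      have hfe : ω.support.filter (fun g => g 2 = f 2) = {f} := by
        ext g
        simp only [Finset.mem_filter, Finset.mem_singleton]
        constructor
        · rintro ⟨hg, h2⟩
          have h1 := hc g hg h2
          calc g = ![a, g 1, g 2, b] := hshape g hg
          _ = ![a, f 1, f 2, b] := by rw [h1, h2]
          _ = f := (hshape f hf).symm
        · rintro rfl; exact ⟨hf, rfl⟩
      have hz := hcolsum f hf
      rw [hfe, Finset.sum_singleton] at hz
      exact Finsupp.mem_support_iff.1 hf hz
    have hI2 : ∀ f ∈ ω.support, ∃ f' ∈ ω.support, f' 1 = f 1 ∧ f' 2 ≠ f 2 := by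
      intro f hf
      by_contra hc
      push_neg at hc
      have hfe : ω.support.filter (fun g => g 1 = f 1) = {f} := by
        ext g
        simp only [Finset.mem_filter, Finset.mem_singleton]
        constructor
        · rintro ⟨hg, h1⟩
          have h2 := hc g hg h1
          calc g = ![a, g 1, g 2, b] := hshape g hg
          _ = ![a, f 1, f 2, b] := by rw [h1, h2]
          _ = f := (hshape f hf).symm
        · rintro rfl; exact ⟨hf, rfl⟩
      have hz := hrowsum f hf
      rw [hfe, Finset.sum_singleton] at hz
      exact Finsupp.mem_support_iff.1 hf hz
    have hstepI : ∀ i j : V, ∃ i' : V,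
        ![a,i,j,b] ∈ ω.support → (![a,i',j,b] ∈ ω.support ∧ i' ≠ i) := by
      intro i j
      by_cases hm' : ![a,i,j,b] ∈ ω.support
      · obtain ⟨f', hf', h2, h1⟩ := hJ2 _ hm'
        refine ⟨f' 1, fun _ => ⟨?_, h1⟩⟩
        have hsh : f' = ![a, f' 1, j, b] := by
          conv_lhs => rw [hshape f' hf']
          rw [show f' 2 = j from h2]
        rw [← hsh]; exact hf'
      · exact ⟨a, fun h => absurd h hm'⟩
    choose nextI hnextI using hstepI
    have hstepJ : ∀ i j : V, ∃ j' : V,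
        ![a,i,j,b] ∈ ω.support → (![a,i,j',b] ∈ ω.support ∧ j' ≠ j) := by
      intro i j
      by_cases hm' : ![a,i,j,b] ∈ ω.support
      · obtain ⟨f', hf', h1, h2⟩ := hI2 _ hm'
        refine ⟨f' 2, fun _ => ⟨?_, h2⟩⟩
        have hsh : f' = ![a, i, f' 2, b] := by
          conv_lhs => rw [hshape f' hf']
          rw [show f' 1 = i from h1]
        rw [← hsh]; exact hf'
      · exact ⟨a, fun h => absurd h hm'⟩
    choose nextJ hnextJ using hstepJ
    set w : ℕ → V × V := fun n => Nat.rec (f0 1, f0 2)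
      (fun _ p => (nextI p.1 p.2, nextJ (nextI p.1 p.2) p.2)) n with hwdef
    have hwmem : ∀ n, ![a, (w n).1, (w n).2, b] ∈ ω.support := by
      intro n
      induction n with
      | zero =>
        show ![a, f0 1, f0 2, b] ∈ ω.support
        rw [← hshape f0 hf0]; exact hf0
      | succ n ih =>
        exact (hnextJ (nextI (w n).1 (w n).2) (w n).2 ((hnextI (w n).1 (w n).2 ih)).1).1
    have hwI : ∀ n, ![a, (w (n+1)).1, (w n).2, b] ∈ ω.support :=
      fun n => (hnextI _ _ (hwmem n)).1
    have hwIne : ∀ n, (w (n+1)).1 ≠ (w n).1 := fun n => (hnextI _ _ (hwmem n)).2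
    have hwJne : ∀ n, (w (n+1)).2 ≠ (w n).2 :=
      fun n => (hnextJ (nextI (w n).1 (w n).2) (w n).2 (hwI n)).2
    set v : ℕ → V := fun t => if t % 2 = 0 then (w (t/2)).1 else (w (t/2)).2 with hvdef
    have hv_even : ∀ n, v (2*n) = (w n).1 := by
      intro n
      show (if (2*n) % 2 = 0 then (w (2*n/2)).1 else (w (2*n/2)).2) = (w n).1
      rw [if_pos (by omega), show 2*n/2 = n by omega]
    have hv_odd : ∀ n, v (2*n+1) = (w n).2 := by
      intro n
      show (if (2*n+1) % 2 = 0 then (w ((2*n+1)/2)).1 else (w ((2*n+1)/2)).2) = (w n).2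
      rw [if_neg (by omega), show (2*n+1)/2 = n by omega]
    set T : Finset V := ω.support.image (fun f => f 1) ∪ ω.support.image (fun f => f 2)
      with hTdef
    have hvT : ∀ t, v t ∈ T := by
      intro t
      by_cases h : t % 2 = 0
      · have h1 : v t = (w (t/2)).1 := if_pos h
        rw [h1]
        exact Finset.mem_union_left _ (Finset.mem_image.2 ⟨_, hwmem (t/2), rfl⟩)
      · have h1 : v t = (w (t/2)).2 := if_neg h
        rw [h1]
        exact Finset.mem_union_right _ (Finset.mem_image.2 ⟨_, hwmem (t/2), rfl⟩)
    have hex : ∃ t, ∃ s, s < t ∧ v s = v t := by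
      obtain ⟨x, -, y, -, hxy, hvxy⟩ := Finset.exists_ne_map_eq_of_card_lt_of_maps_to
        (s := Finset.range (T.card + 1)) (by simpa using Nat.lt_succ_self T.card)
        (fun t _ => hvT t)
      rcases lt_or_gt_of_ne hxy with h | h
      · exact ⟨y, x, h, hvxy⟩
      · exact ⟨x, y, h, hvxy.symm⟩
    obtain ⟨s, hst, hvst⟩ := Nat.find_spec hex
    set t0 := Nat.find hex with ht0def
    have hvinj : ∀ p q, p < t0 → q < t0 → v p = v q → p = q := by
      intro p q hp hq h
      rcases lt_trichotomy p q with h' | h' | h'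
      · exact absurd ⟨p, h', h⟩ (Nat.find_min hex hq)
      · exact h'
      · exact absurd ⟨q, h', h.symm⟩ (Nat.find_min hex hp)
    have hwv1 : ∀ n, (w n).1 ∈ setA G a b \ setB G a b := fun n => hf1A _ (hwmem n)
    have hwv2 : ∀ n, (w n).2 ∈ setB G a b \ setA G a b := fun n => hf2B _ (hwmem n)
    have hpar : s % 2 = t0 % 2 := by
      rcases Nat.mod_two_eq_zero_or_one s with hs | hs <;>
        rcases Nat.mod_two_eq_zero_or_one t0 with ht | ht
      · omega
      · exfalso
        have h1 : v s = (w (s/2)).1 := if_pos hs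
        have h2 : v t0 = (w (t0/2)).2 := if_neg (by omega)
        have h3 := hwv1 (s/2)
        rw [← h1, hvst, h2] at h3
        exact h3.2 (hwv2 (t0/2)).1
      · exfalso
        have h1 : v s = (w (s/2)).2 := if_neg (by omega)
        have h2 : v t0 = (w (t0/2)).1 := if_pos ht
        have h3 := hwv1 (t0/2)
        rw [← h2, ← hvst, h1] at h3
        exact h3.2 (hwv2 (s/2)).1
      · omega
    have hne2 : t0 ≠ s + 2 := by
      intro h
      rcases Nat.mod_two_eq_zero_or_one s with hs | hs
      · have h1 : v s = (w (s/2)).1 := if_pos hs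
        have h2 : v (s+2) = (w (s/2+1)).1 := by
          have h3 : v (s+2) = (w ((s+2)/2)).1 := if_pos (by omega)
          rw [h3, show (s+2)/2 = s/2 + 1 by omega]
        rw [h, h2, h1] at hvst
        exact hwIne (s/2) hvst.symm
      · have h1 : v s = (w (s/2)).2 := if_neg (by omega)
        have h2 : v (s+2) = (w (s/2+1)).2 := by
          have h3 : v (s+2) = (w ((s+2)/2)).2 := if_neg (by omega)
          rw [h3, show (s+2)/2 = s/2 + 1 by omega]
        rw [h, h2, h1] at hvst
        exact hwJne (s/2) hvst.symm
    set m' := (t0 - s)/2 with hm'def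
    have hm'2 : 2 ≤ m' := by omega
    have ht0m : t0 = s + 2*m' := by omega
    rcases Nat.mod_two_eq_zero_or_one s with hs | hs
    · -- s even
      set s' := s/2 with hs'def
      have hs2 : s = 2*s' := by omega
      refine key m' hm'2 (fun k => (w (s' + (k:ℕ))).1) (fun k => (w (s' + (k:ℕ))).2)
        ?_ ?_ ?_ ?_
      · intro k l h
        have hk := hv_even (s' + (k:ℕ))
        have hl := hv_even (s' + (l:ℕ))
        have hkl : 2*(s' + (k:ℕ)) = 2*(s' + (l:ℕ)) := by
          refine hvinj _ _ ?_ ?_ ?_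
          · have := k.isLt; omega
          · have := l.isLt; omega
          · rw [hk, hl]; exact h
        exact Fin.ext (by omega)
      · intro k l h
        have hk := hv_odd (s' + (k:ℕ))
        have hl := hv_odd (s' + (l:ℕ))
        have hkl : 2*(s' + (k:ℕ))+1 = 2*(s' + (l:ℕ))+1 := by
          refine hvinj _ _ ?_ ?_ ?_
          · have := k.isLt; omega
          · have := l.isLt; omega
          · rw [hk, hl]; exact h
        exact Fin.ext (by omega)
      · intro k
        exact hwmem (s' + (k:ℕ))
      · intro k
        by_cases hk : (k:ℕ) + 1 < m'
        · have hr : ((finRot k : Fin m') : ℕ) = (k:ℕ)+1 := Nat.mod_eq_of_lt hk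
          show ![a, (w (s' + ((finRot k : Fin m') : ℕ))).1, (w (s' + (k:ℕ))).2, b] ∈ ω.support
          rw [hr, show s' + ((k:ℕ)+1) = s' + (k:ℕ) + 1 by omega]
          exact hwI (s' + (k:ℕ))
        · have hk1 : (k:ℕ) = m' - 1 := by have := k.isLt; omega
          have hr0 : ((finRot k : Fin m') : ℕ) = 0 := by
            show ((k:ℕ)+1) % m' = 0
            rw [hk1, show m' - 1 + 1 = m' by omega]
            exact Nat.mod_self m'
          have he1 : (w s').1 = (w (s' + m')).1 := by
            have ha1 : v s = (w s').1 := by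
              have := hv_even s'
              rw [← hs2] at this
              exact this
            have ha2 : v t0 = (w (s' + m')).1 := by
              have := hv_even (s' + m')
              rw [show 2*(s' + m') = t0 by omega] at this
              exact this
            rw [← ha1, ← ha2, hvst]
          show ![a, (w (s' + ((finRot k : Fin m') : ℕ))).1, (w (s' + (k:ℕ))).2, b] ∈ ω.support
          rw [hr0, Nat.add_zero, he1, hk1]
          have h1 := hwI (s' + (m'-1))
          rw [show s' + (m'-1) + 1 = s' + m' by omega] at h1
          exact h1
    · -- s odd
      set s' := s/2 with hs'def
      have hs2 : s = 2*s' + 1 := by omega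
      refine key m' hm'2 (fun k => (w (s' + m' - (k:ℕ))).1)
        (fun k => (w (s' + m' - (k:ℕ) - 1)).2) ?_ ?_ ?_ ?_
      · intro k l h
        have hk := hv_even (s' + m' - (k:ℕ))
        have hl := hv_even (s' + m' - (l:ℕ))
        have hkl : 2*(s' + m' - (k:ℕ)) = 2*(s' + m' - (l:ℕ)) := by
          refine hvinj _ _ ?_ ?_ ?_
          · have := k.isLt; omega
          · have := l.isLt; omega
          · rw [hk, hl]; exact h
        have hkm := k.isLt; have hlm := l.isLt
        exact Fin.ext (by omega)
      · intro k l h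
        have hk := hv_odd (s' + m' - (k:ℕ) - 1)
        have hl := hv_odd (s' + m' - (l:ℕ) - 1)
        have hkl : 2*(s' + m' - (k:ℕ) - 1)+1 = 2*(s' + m' - (l:ℕ) - 1)+1 := by
          refine hvinj _ _ ?_ ?_ ?_
          · have := k.isLt; omega
          · have := l.isLt; omega
          · rw [hk, hl]; exact h
        have hkm := k.isLt; have hlm := l.isLt
        exact Fin.ext (by omega)
      · intro k
        show ![a, (w (s' + m' - (k:ℕ))).1, (w (s' + m' - (k:ℕ) - 1)).2, b] ∈ ω.support
        have h1 := hwI (s' + m' - (k:ℕ) - 1)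
        rw [show s' + m' - (k:ℕ) - 1 + 1 = s' + m' - (k:ℕ) by (have := k.isLt; omega)] at h1
        exact h1
      · intro k
        by_cases hk : (k:ℕ) + 1 < m'
        · have hr : ((finRot k : Fin m') : ℕ) = (k:ℕ)+1 := Nat.mod_eq_of_lt hk
          show ![a, (w (s' + m' - ((finRot k : Fin m') : ℕ))).1,
            (w (s' + m' - (k:ℕ) - 1)).2, b] ∈ ω.support
          rw [hr, show s' + m' - ((k:ℕ)+1) = s' + m' - (k:ℕ) - 1 by omega]
          exact hwmem (s' + m' - (k:ℕ) - 1)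
        · have hk1 : (k:ℕ) = m' - 1 := by have := k.isLt; omega
          have hr0 : ((finRot k : Fin m') : ℕ) = 0 := by
            show ((k:ℕ)+1) % m' = 0
            rw [hk1, show m' - 1 + 1 = m' by omega]
            exact Nat.mod_self m'
          have he1 : (w (s' + m')).2 = (w s').2 := by
            have ha1 : v s = (w s').2 := by
              have := hv_odd s'
              rw [← hs2] at this
              exact this
            have ha2 : v t0 = (w (s' + m')).2 := by
              have := hv_odd (s' + m')
              rw [show 2*(s' + m') + 1 = t0 by omega] at this
              exact this
            rw [← ha1, ← ha2, hvst]
          show ![a, (w (s' + m' - ((finRot k : Fin m') : ℕ))).1,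
            (w (s' + m' - (k:ℕ) - 1)).2, b] ∈ ω.support
          rw [hr0, Nat.sub_zero, hk1,
            show s' + m' - (m'-1) - 1 = s' by omega, ← he1]
          exact hwmem (s' + m')
  intro m hm iv jv hivinj hjvinj hE1 hE2
  haveI : NeZero m := ⟨by omega⟩
  have hrne : ∀ k : Fin m, finRot k ≠ k := finRot_ne hm
  have hrinj : Function.Injective (finRot (m := m)) := finRot_injective
  have hrbij : Function.Bijective (finRot (m := m)) := Finite.injective_iff_bijective.1 hrinj
  have hiv : ∀ k, iv k ∈ setA G a b \ setB G a b := fun k => hf1A _ (hE1 k)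
  have hjv : ∀ k, jv k ∈ setB G a b \ setA G a b := fun k => hf2B _ (hE1 k)
  have hadjiv : ∀ k, G.Adj (iv k) (jv k) := fun k => hadj12 _ (hE1 k)
  have hadjrot : ∀ k, G.Adj (iv (finRot k)) (jv k) := fun k => hadj12 _ (hE2 k)
  have hane : ∀ k, a ≠ iv k := fun k => hne_af1 _ (hE1 k)
  have hjvb : ∀ k, jv k ≠ b := fun k => hne_f2b _ (hE1 k)
  have hajv : ∀ k, a ≠ jv k := fun k => (hterm _ (hE1 k)).2.1
  have hivb : ∀ k, iv k ≠ b := fun k => (hterm _ (hE1 k)).2.2.2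
  have hivjv : ∀ k, iv k ≠ jv k := fun k => hne_f12 _ (hE1 k)
  have hrotjv : ∀ k, iv (finRot k) ≠ jv k := fun k => hne_f12 _ (hE2 k)
  have hpq : ∀ k l : Fin m, ![a, iv k, jv k, b] = ![a, iv (finRot l), jv l, b] → False := by
    intro k l h
    obtain ⟨-, h1, h2, -⟩ := vec4_eq_iff.1 h
    cases hjvinj h2
    exact hrne k (hivinj h1).symm
  have hpp : ∀ k l : Fin m, ![a, iv k, jv k, b] = ![a, iv l, jv l, b] → k = l :=
    fun k l h => hjvinj (vec4_eq_iff.1 h).2.2.1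
  have hqq : ∀ k l : Fin m, ![a, iv (finRot k), jv k, b] = ![a, iv (finRot l), jv l, b] → k = l :=
    fun k l h => hjvinj (vec4_eq_iff.1 h).2.2.1
  set ω' : EPath V 3 →₀ K := ∑ k : Fin m, (Finsupp.single ![a, iv k, jv k, b] (1 : K)
      - Finsupp.single ![a, iv (finRot k), jv k, b] (1 : K)) with hω'def
  have happ : ∀ f, ω' f = ∑ k : Fin m, ((if ![a, iv k, jv k, b] = f then (1:K) else 0)
      - (if ![a, iv (finRot k), jv k, b] = f then 1 else 0)) := by
    intro f
    rw [hω'def, Finsupp.finset_sum_apply]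
    refine Finset.sum_congr rfl fun k _ => ?_
    rw [Finsupp.sub_apply, Finsupp.single_apply, Finsupp.single_apply]
  have hω'p : ∀ k, ω' (![a, iv k, jv k, b]) = 1 := by
    intro k
    rw [happ]
    have hterms : ∀ l ∈ (Finset.univ : Finset (Fin m)),
        ((if ![a, iv l, jv l, b] = ![a, iv k, jv k, b] then (1:K) else 0)
          - (if ![a, iv (finRot l), jv l, b] = ![a, iv k, jv k, b] then 1 else 0))
        = if l = k then 1 else 0 := by
      intro l _
      rw [if_neg (fun h : ![a, iv (finRot l), jv l, b] = ![a, iv k, jv k, b] =>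
        hpq k l h.symm)]
      by_cases h : l = k
      · rw [if_pos (by rw [h]), if_pos h]; ring
      · rw [if_neg (fun hh => h (hpp l k hh)), if_neg h]; ring
    rw [Finset.sum_congr rfl hterms, Finset.sum_ite_eq' Finset.univ k (fun _ => (1:K))]
    simp
  have hω'q : ∀ k, ω' (![a, iv (finRot k), jv k, b]) = -1 := by
    intro k
    rw [happ]
    have hterms : ∀ l ∈ (Finset.univ : Finset (Fin m)),
        ((if ![a, iv l, jv l, b] = ![a, iv (finRot k), jv k, b] then (1:K) else 0)
          - (if ![a, iv (finRot l), jv l, b] = ![a, iv (finRot k), jv k, b] then 1 else 0))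
        = if l = k then -1 else 0 := by
      intro l _
      rw [if_neg (fun h : ![a, iv l, jv l, b] = ![a, iv (finRot k), jv k, b] =>
        hpq l k h)]
      by_cases h : l = k
      · rw [if_pos (by rw [h]), if_pos h]; ring
      · rw [if_neg (fun hh => h (hqq l k hh)), if_neg h]; ring
    rw [Finset.sum_congr rfl hterms, Finset.sum_ite_eq' Finset.univ k (fun _ => (-1:K))]
    simp
  have hω'zero : ∀ f, (∀ k, ![a, iv k, jv k, b] ≠ f) →
      (∀ k, ![a, iv (finRot k), jv k, b] ≠ f) → ω' f = 0 := by
    intro f h1 h2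
    rw [happ]
    refine Finset.sum_eq_zero fun k _ => ?_
    rw [if_neg (h1 k), if_neg (h2 k)]; ring
  have hω'supp : ω'.support ⊆ ω.support := by
    intro f hf
    by_contra hfo
    refine (Finsupp.mem_support_iff.1 hf) (hω'zero f ?_ ?_) <;> intro k h
    · exact hfo (h ▸ hE1 k)
    · exact hfo (h ▸ hE2 k)
  have hω'mem : ω' ∈ Omega K V G 3 := by
    rw [Omega3_eq]
    refine Submodule.mem_inf.2 ⟨?_, ?_⟩
    · rw [allowedMod_eq, Finsupp.mem_supported]
      intro f hf
      exact hωA (hω'supp hf)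
    · rw [Submodule.mem_comap, allowedMod_eq]
      have hbd1 : bdry K V 2 ω' = ∑ k : Fin m,
          ((Finsupp.single ![iv k, jv k, b] (1:K) - Finsupp.single ![iv (finRot k), jv k, b] 1
            - Finsupp.single ![a, iv k, jv k] 1 + Finsupp.single ![a, iv (finRot k), jv k] 1)
          + (Finsupp.single ![a, iv k, b] 1 - Finsupp.single ![a, iv (finRot k), b] 1)) := by
        rw [hω'def, map_sum]
        refine Finset.sum_congr rfl fun k _ => ?_
        rw [map_sub, bdry_single_abij a (iv k) (jv k) b (hane k) (hivjv k) (hjvb k)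
              (hajv k) (hivb k),
          bdry_single_abij a (iv (finRot k)) (jv k) b (hane (finRot k)) (hrotjv k) (hjvb k)
              (hajv k) (hivb (finRot k))]
        abel
      have hbd2 : ∑ k : Fin m, (Finsupp.single ![a, iv k, b] (1:K)
          - Finsupp.single ![a, iv (finRot k), b] 1) = 0 := by
        rw [Finset.sum_sub_distrib]
        rw [Fintype.sum_bijective finRot hrbij
          (fun k => Finsupp.single ![a, iv (finRot k), b] (1:K))
          (fun k => Finsupp.single ![a, iv k, b] (1:K)) (fun k => rfl)]
        exact sub_self _
      rw [hbd1, Finset.sum_add_distrib, hbd2, add_zero]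
      refine Submodule.sum_mem _ fun k _ => ?_
      refine Submodule.add_mem _ (Submodule.sub_mem _ (Submodule.sub_mem _ ?_ ?_) ?_) ?_ <;>
        refine Finsupp.single_mem_supported K 1 ?_
      · exact allow3 (hadjiv k) ((hjv k).1.1)
      · exact allow3 (hadjrot k) ((hjv k).1.1)
      · exact allow3 ((hiv k).1.1) (hadjiv k)
      · exact allow3 ((hiv (finRot k)).1.1) (hadjrot k)
  have hω'ne : ω' ≠ 0 := by
    intro h
    have := hω'p ⟨0, by omega⟩
    rw [h] at this
    simp at this
  have hsupp_eq : ω'.support = ω.support := by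
    by_contra hne'
    exact hminimal ω' hω'mem hω'ne (Finset.ssubset_iff_subset_ne.2 ⟨hω'supp, hne'⟩)
  have hclassify : ∀ f ∈ ω.support,
      ∃ k, f = ![a, iv k, jv k, b] ∨ f = ![a, iv (finRot k), jv k, b] := by
    intro f hf
    rw [← hsupp_eq] at hf
    by_contra hc
    push_neg at hc
    exact Finsupp.mem_support_iff.1 hf
      (hω'zero f (fun k h => (hc k).1 h.symm) (fun k h => (hc k).2 h.symm))
  have hrel1 : ∀ k, ω ![a, iv k, jv k, b] + ω ![a, iv (finRot k), jv k, b] = 0 := by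
    intro k
    have h := hcolsum ![a, iv k, jv k, b] (hE1 k)
    have hfe : ω.support.filter (fun f => f 2 = (![a, iv k, jv k, b] : EPath V 3) 2)
        = {![a, iv k, jv k, b], ![a, iv (finRot k), jv k, b]} := by
      ext f
      simp only [Finset.mem_filter, Finset.mem_insert, Finset.mem_singleton]
      constructor
      · rintro ⟨hf, h2⟩
        have h2' : f 2 = jv k := h2
        obtain ⟨l, hl | hl⟩ := hclassify f hf
        · rw [hl] at h2' ⊢
          cases hjvinj (show jv l = jv k from h2')
          exact Or.inl rfl
        · rw [hl] at h2' ⊢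
          cases hjvinj (show jv l = jv k from h2')
          exact Or.inr rfl
      · rintro (rfl | rfl)
        exacts [⟨hE1 k, rfl⟩, ⟨hE2 k, rfl⟩]
    rw [hfe, Finset.sum_pair (fun hh : ![a, iv k, jv k, b] = ![a, iv (finRot k), jv k, b] =>
      hpq k k hh)] at h
    exact h
  have hrel2 : ∀ k, ω ![a, iv (finRot k), jv (finRot k), b] + ω ![a, iv (finRot k), jv k, b] = 0 := by
    intro k
    have h := hrowsum ![a, iv (finRot k), jv k, b] (hE2 k)
    have hfe : ω.support.filter (fun f => f 1 = (![a, iv (finRot k), jv k, b] : EPath V 3) 1)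
        = {![a, iv (finRot k), jv (finRot k), b], ![a, iv (finRot k), jv k, b]} := by
      ext f
      simp only [Finset.mem_filter, Finset.mem_insert, Finset.mem_singleton]
      constructor
      · rintro ⟨hf, h1⟩
        have h1' : f 1 = iv (finRot k) := h1
        obtain ⟨l, hl | hl⟩ := hclassify f hf
        · rw [hl] at h1' ⊢
          cases hivinj (show iv l = iv (finRot k) from h1')
          exact Or.inl rfl
        · rw [hl] at h1' ⊢
          cases hrinj (hivinj (show iv (finRot l) = iv (finRot k) from h1'))
          exact Or.inr rfl
      · rintro (rfl | rfl)
        exacts [⟨hE1 (finRot k), rfl⟩, ⟨hE2 k, rfl⟩]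
    have hpair : (![a, iv (finRot k), jv (finRot k), b] : EPath V 3)
        ≠ ![a, iv (finRot k), jv k, b] := by
      intro hh
      exact hrne k (hjvinj (vec4_eq_iff.1 hh).2.2.1)
    rw [hfe, Finset.sum_pair hpair] at h
    exact h
  have hstep : ∀ k, ω ![a, iv (finRot k), jv (finRot k), b] = ω ![a, iv k, jv k, b] := by
    intro k
    linear_combination (hrel2 k) - (hrel1 k)
  have k0 : Fin m := ⟨0, by omega⟩
  have hnat : ∀ n : ℕ, ω ![a, iv ⟨n % m, Nat.mod_lt n (by omega)⟩, jv ⟨n % m, Nat.mod_lt n (by omega)⟩, b]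
      = ω ![a, iv ⟨0, by omega⟩, jv ⟨0, by omega⟩, b] := by
    intro n
    induction n with
    | zero =>
      have h0 : (⟨0 % m, Nat.mod_lt 0 (by omega)⟩ : Fin m) = ⟨0, by omega⟩ :=
        Fin.ext (Nat.zero_mod m)
      rw [h0]
    | succ n ih =>
      have hr : (⟨(n+1) % m, Nat.mod_lt (n+1) (by omega)⟩ : Fin m)
          = finRot ⟨n % m, Nat.mod_lt n (by omega)⟩ :=
        Fin.ext (Nat.mod_add_mod n m 1).symm
      rw [hr, hstep, ih]
  have hconst : ∀ k, ω ![a, iv k, jv k, b] = ω ![a, iv ⟨0, by omega⟩, jv ⟨0, by omega⟩, b] := by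
    intro k
    have hk : k = ⟨(k:ℕ) % m, Nat.mod_lt _ (by omega)⟩ :=
      Fin.ext (Nat.mod_eq_of_lt k.isLt).symm
    rw [hk]
    exact hnat (k:ℕ)
  refine ⟨m, hm, ω ![a, iv ⟨0, by omega⟩, jv ⟨0, by omega⟩, b], iv, jv, hivinj, hjvinj,
    hiv, hjv, hadjiv, hadjrot, ?_⟩
  rw [← hω'def]
  ext f
  rw [Finsupp.smul_apply, smul_eq_mul]
  by_cases hf : f ∈ ω.support
  · obtain ⟨k, hk | hk⟩ := hclassify f hf
    · rw [hk, hω'p k, mul_one, hconst k]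
    · rw [hk, hω'q k]
      linear_combination (hrel1 k) - (hconst k)
  · have h1 : ω f = 0 := Finsupp.notMem_support_iff.1 hf
    have h2 : ω' f = 0 := Finsupp.notMem_support_iff.1 (by rw [hsupp_eq]; exact hf)
    rw [h1, h2, mul_zero]
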